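/- Let p be an odd prime, k an even positive integer, and λ an integer with 0 ≤ λ < p. Setting l = (−1)^{k(p−1)/4} · p^{(k−2)/2}, one has ρ_{k,λ}(p) = p^{k−1} − l + (1 − |(λ/p)|) · p · l; equivalently, ρ_{k,λ}(p) = p^{k−1} − l when p ∤ λ, and ρ_{k,0}(p) = p^{k−1} + (p−1)·l. -/

import Mathlib

open Finset

section Count

variable (p : ℕ) [Fact p.Prime]

/-- number of representations of `a` as a sum of `k` squares in `ZMod p`. -/
noncomputable def cnt (k : ℕ) (a : ZMod p) : ℕ :=
  Nat.card {x : Fin k → ZMod p // ∑ i, x i ^ 2 = a}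

lemma cnt_succ (k : ℕ) (a : ZMod p) :
    cnt p (k + 1) a = ∑ b : ZMod p, cnt p k (a - b ^ 2) := by
  classical
  have e : {x : Fin (k+1) → ZMod p // ∑ i, x i ^ 2 = a} ≃
      Σ b : ZMod p, {y : Fin k → ZMod p // ∑ i, y i ^ 2 = a - b ^ 2} :=
    { toFun := fun x => ⟨x.1 0, ⟨fun i => x.1 i.succ, by
        have h := x.2
        rw [Fin.sum_univ_succ] at h
        exact eq_sub_of_add_eq' h⟩⟩
      invFun := fun y => ⟨Fin.cons y.1 y.2.1, by
        rw [Fin.sum_univ_succ]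
        simp only [Fin.cons_zero, Fin.cons_succ]
        rw [y.2.2]; ring⟩
      left_inv := fun x => by
        ext i
        refine Fin.cases ?_ (fun j => ?_) i <;> simp
      right_inv := fun y => by
        refine Sigma.ext ?_ ?_ <;> simp <;> exact HEq.rfl }
  rw [cnt, Nat.card_congr e, Nat.card_eq_fintype_card, Fintype.card_sigma]
  simp [cnt, Nat.card_eq_fintype_card]

lemma cnt_total (k : ℕ) : ∑ a : ZMod p, cnt p k a = p ^ k := by
  classical
  have := (Equiv.sigmaFiberEquiv (fun x : Fin k → ZMod p => ∑ i, x i ^ 2))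
  have h := Nat.card_congr this
  rw [Nat.card_eq_fintype_card, Fintype.card_sigma, Nat.card_eq_fintype_card] at h
  simp only [cnt, Nat.card_eq_fintype_card]
  rw [h]
  simp [ZMod.card]

end Count

section Char

variable (p : ℕ) [Fact p.Prime]

local notation "χ" => quadraticChar (ZMod p)

lemma ringChar_ne_two (hp2 : p ≠ 2) : ringChar (ZMod p) ≠ 2 := by
  rw [ZMod.ringChar_zmod_n]; exact hp2

lemma sum_sq_reindex (hp2 : p ≠ 2) (g : ZMod p → ℤ) :
    ∑ x : ZMod p, g (x ^ 2) = ∑ b : ZMod p, (χ b + 1) * g b := by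
  classical
  rw [← Fintype.sum_fiberwise (fun x : ZMod p => x ^ 2) (fun x => g (x ^ 2))]
  refine Fintype.sum_congr _ _ fun b => ?_
  have h1 : ∀ a : {x : ZMod p // x ^ 2 = b}, g (a.1 ^ 2) = g b := fun a => by rw [a.2]
  rw [Fintype.sum_congr _ _ h1, Finset.sum_const, nsmul_eq_mul]
  congr 1
  have h2 := quadraticChar_card_sqrts (ringChar_ne_two p hp2) b
  rw [Set.toFinset_card] at h2
  rw [Finset.card_univ]
  exact h2

lemma cnt_zero (c : ZMod p) : cnt p 0 c = if c = 0 then 1 else 0 := by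
  have hs : ∀ x : Fin 0 → ZMod p, ∑ i, x i ^ 2 = 0 := fun x => by simp
  split_ifs with h
  · subst h
    rw [cnt, Nat.card_eq_fintype_card, Fintype.card_eq_one_iff]
    exact ⟨⟨fun i => i.elim0, hs _⟩, fun y => Subtype.ext (funext fun i => i.elim0)⟩
  · have : IsEmpty {x : Fin 0 → ZMod p // ∑ i, x i ^ 2 = c} :=
      ⟨fun x => h (((hs x.1).symm.trans x.2).symm)⟩
    rw [cnt, Nat.card_of_isEmpty]

lemma cnt_step (hp2 : p ≠ 2) (k : ℕ) (a : ZMod p) :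
    ((cnt p (k + 1) a : ℤ)) = (p : ℤ) ^ k + ∑ b : ZMod p, χ b * (cnt p k (a - b) : ℤ) := by
  have h1 : ((cnt p (k + 1) a : ℤ)) = ∑ x : ZMod p, ((cnt p k (a - x ^ 2) : ℤ)) := by
    rw [cnt_succ]; push_cast; rfl
  rw [h1, sum_sq_reindex p hp2 (fun b => (cnt p k (a - b) : ℤ))]
  have h2 : ∑ b : ZMod p, ((cnt p k (a - b) : ℤ)) = (p : ℤ) ^ k := by
    have e1 : ∑ b : ZMod p, ((cnt p k (a - b) : ℤ)) = ∑ c : ZMod p, ((cnt p k c : ℤ)) :=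
      Fintype.sum_equiv (Equiv.subLeft a) _ _ (fun b => rfl)
    rw [e1, ← Nat.cast_sum, cnt_total]
    push_cast; rfl
  rw [← h2]
  rw [Finset.sum_congr rfl (fun b _ => add_mul (χ b) 1 ((cnt p k (a - b) : ℤ))),
    Finset.sum_add_distrib]
  simp [add_comm]

lemma S_eval (hp2 : p ≠ 2) (a : ZMod p) :
    ∑ b : ZMod p, χ b * χ (a - b)
      = (p : ℤ) * χ (-1) * (if a = 0 then 1 else 0) - χ (-1) := by
  classical
  by_cases h : a = 0
  · subst h
    simp only [if_pos rfl, mul_one, zero_sub]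
    have h1 : ∀ b : ZMod p, χ b * χ (-b) = χ (-1) * (if b = 0 then 0 else 1) := by
      intro b
      by_cases hb : b = 0
      · simp [hb]
      · have : χ (-b) = χ (-1) * χ b := by rw [← map_mul]; ring_nf
        rw [this]
        have hsq : χ b * χ b = 1 := by
          have := quadraticChar_sq_one (F := ZMod p) hb
          rwa [sq] at this
        rw [if_neg hb, mul_one]
        calc χ b * (χ (-1) * χ b) = χ (-1) * (χ b * χ b) := by ring
          _ = χ (-1) := by rw [hsq, mul_one]
    rw [Finset.sum_congr rfl (fun b _ => h1 b), ← Finset.mul_sum]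
    have h2 : ∑ b : ZMod p, (if b = (0 : ZMod p) then (0:ℤ) else 1) = (p : ℤ) - 1 := by
      have : ∀ b : ZMod p, (if b = (0 : ZMod p) then (0:ℤ) else 1)
          = 1 - (if b = 0 then 1 else 0) := by intro b; split_ifs <;> ring
      rw [Finset.sum_congr rfl (fun b _ => this b), Finset.sum_sub_distrib]
      simp [Finset.card_univ, ZMod.card]
    rw [h2]; simp; ring
  · rw [if_neg h, mul_zero, zero_sub]
    rw [← Equiv.sum_comp (Equiv.mulLeft₀ a h) (fun b => χ b * χ (a - b))]
    have h1 : ∀ t : ZMod p, χ ((Equiv.mulLeft₀ a h) t) * χ (a - (Equiv.mulLeft₀ a h) t)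
        = χ t * χ (1 - t) := by
      intro t
      simp only [Equiv.mulLeft₀_apply]
      have : a - a * t = a * (1 - t) := by ring
      rw [this, map_mul, map_mul]
      have hsq : χ a * χ a = 1 := by
        have := quadraticChar_sq_one (F := ZMod p) h
        rwa [sq] at this
      calc χ a * χ t * (χ a * χ (1 - t)) = (χ a * χ a) * (χ t * χ (1 - t)) := by ring
        _ = χ t * χ (1 - t) := by rw [hsq, one_mul]
    rw [Finset.sum_congr rfl (fun t _ => h1 t)]
    have hJ : ∑ t : ZMod p, χ t * χ (1 - t) = jacobiSum χ χ := rfl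
    have hinv : (quadraticChar (ZMod p))⁻¹ = χ := (quadraticChar_isQuadratic (ZMod p)).inv
    have hres := jacobiSum_nontrivial_inv (quadraticChar_ne_one (ringChar_ne_two p hp2))
    rw [hinv] at hres
    rw [hJ, hres]

lemma sum_char_delta (f : ZMod p → ℤ) (a : ZMod p) :
    ∑ b : ZMod p, χ b * (if a - b = 0 then f b else 0) = χ a * f a := by
  classical
  have h1 : ∀ b : ZMod p, χ b * (if a - b = 0 then f b else 0)
      = if b = a then χ b * f b else 0 := by
    intro b
    have : a - b = 0 ↔ b = a := by
      rw [sub_eq_zero]; exact eq_comm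
    split_ifs with h h' h' <;> simp_all
  rw [Finset.sum_congr rfl (fun b _ => h1 b), Finset.sum_ite_eq' Finset.univ a
    (fun b => χ b * f b)]
  simp

lemma cnt_odd (hp2 : p ≠ 2) (m : ℕ) :
    ∀ a : ZMod p, (cnt p (2 * m + 1) a : ℤ)
      = (p : ℤ) ^ (2 * m) + (χ (-1)) ^ m * (p : ℤ) ^ m * χ a := by
  induction m with
  | zero =>
    intro a
    rw [show 2 * 0 + 1 = 0 + 1 from rfl, cnt_step p hp2 0 a]
    have h1 : ∀ b : ZMod p, χ b * (cnt p 0 (a - b) : ℤ)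
        = χ b * (if a - b = 0 then (1:ℤ) else 0) := by
      intro b; rw [cnt_zero]; split_ifs <;> simp
    rw [Finset.sum_congr rfl (fun b _ => h1 b)]
    have h2 := sum_char_delta p (fun _ => (1:ℤ)) a
    rw [h2]; simp
  | succ m ih =>
    have heven : ∀ a : ZMod p, (cnt p (2 * m + 2) a : ℤ)
        = (p : ℤ) ^ (2 * m + 1)
          + (χ (-1)) ^ m * (p : ℤ) ^ m * ∑ b : ZMod p, χ b * χ (a - b) := by
      intro a
      rw [show 2 * m + 2 = (2 * m + 1) + 1 from rfl, cnt_step p hp2 (2 * m + 1) a]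
      rw [Finset.sum_congr rfl (fun b _ => by rw [ih (a - b)])]
      have expand : ∀ b : ZMod p,
          χ b * ((p : ℤ) ^ (2 * m) + (χ (-1)) ^ m * (p : ℤ) ^ m * χ (a - b))
          = (p : ℤ) ^ (2 * m) * χ b
            + (χ (-1)) ^ m * (p : ℤ) ^ m * (χ b * χ (a - b)) := fun b => by ring
      rw [Finset.sum_congr rfl (fun b _ => expand b), Finset.sum_add_distrib,
        ← Finset.mul_sum, ← Finset.mul_sum,
        quadraticChar_sum_zero (ringChar_ne_two p hp2)]
      ring
    intro a
    rw [show 2 * (m + 1) + 1 = (2 * m + 2) + 1 by ring, cnt_step p hp2 (2 * m + 2) a]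
    rw [Finset.sum_congr rfl (fun b _ => by rw [heven (a - b)])]
    have expand : ∀ b : ZMod p,
        χ b * ((p : ℤ) ^ (2 * m + 1)
          + (χ (-1)) ^ m * (p : ℤ) ^ m * ∑ c : ZMod p, χ c * χ (a - b - c))
        = (p : ℤ) ^ (2 * m + 1) * χ b
          + (χ (-1)) ^ m * (p : ℤ) ^ m
            * (χ b * ∑ c : ZMod p, χ c * χ (a - b - c)) := fun b => by ring
    rw [Finset.sum_congr rfl (fun b _ => expand b), Finset.sum_add_distrib,
      ← Finset.mul_sum, ← Finset.mul_sum,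
      quadraticChar_sum_zero (ringChar_ne_two p hp2)]
    have hS : ∀ b : ZMod p,
        χ b * ∑ c : ZMod p, χ c * χ (a - b - c)
        = (p : ℤ) * χ (-1) * (χ b * (if a - b = 0 then 1 else 0)) - χ (-1) * χ b := by
      intro b
      rw [S_eval p hp2 (a - b)]
      ring
    rw [Finset.sum_congr rfl (fun b _ => hS b), Finset.sum_sub_distrib,
      ← Finset.mul_sum, ← Finset.mul_sum,
      quadraticChar_sum_zero (ringChar_ne_two p hp2)]
    have h2 := sum_char_delta p (fun _ => (1:ℤ)) a
    simp only [mul_one] at h2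
    rw [h2]
    ring

lemma cnt_even (hp2 : p ≠ 2) (m : ℕ) (a : ZMod p) :
    (cnt p (2 * m + 2) a : ℤ)
      = (p : ℤ) ^ (2 * m + 1)
        + (χ (-1)) ^ (m + 1) * (p : ℤ) ^ m * ((p : ℤ) * (if a = 0 then 1 else 0) - 1) := by
  rw [show 2 * m + 2 = (2 * m + 1) + 1 from rfl, cnt_step p hp2 (2 * m + 1) a]
  rw [Finset.sum_congr rfl (fun b _ => by rw [cnt_odd p hp2 m (a - b)])]
  have expand : ∀ b : ZMod p,
      χ b * ((p : ℤ) ^ (2 * m) + (χ (-1)) ^ m * (p : ℤ) ^ m * χ (a - b))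
      = (p : ℤ) ^ (2 * m) * χ b
        + (χ (-1)) ^ m * (p : ℤ) ^ m * (χ b * χ (a - b)) := fun b => by ring
  rw [Finset.sum_congr rfl (fun b _ => expand b), Finset.sum_add_distrib,
    ← Finset.mul_sum, ← Finset.mul_sum,
    quadraticChar_sum_zero (ringChar_ne_two p hp2), S_eval p hp2 a]
  ring

end Char

/-- `rho k lam n` is the number of `k`-tuples `(x₁,…,x_k) ∈ (ℤ/nℤ)^k` with
`x₁² + ⋯ + x_k² ≡ lam (mod n)`. -/
noncomputable def rho (k : ℕ) (lam : ℤ) (n : ℕ) : ℕ :=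
  Nat.card {x : Fin k → ZMod n // ∑ i, x i ^ 2 = (lam : ZMod n)}

/-- Lebesgue's formula for `ρ_{k,λ}(p)` when `k` is even, with
`l = (−1)^{k(p−1)/4} · p^{(k−2)/2}`. -/
theorem rho_prime_of_even (p : ℕ) [Fact p.Prime] (hp : Odd p) (k : ℕ) (hk0 : 0 < k)
    (hk : Even k) (lam : ℤ) (hlam0 : 0 ≤ lam) (hlam1 : lam < p) (l : ℤ)
    (hl : l = (-1) ^ (k * (p - 1) / 4) * (p : ℤ) ^ ((k - 2) / 2)) :
    (rho k lam p : ℤ) = (p : ℤ) ^ (k - 1) - l + (1 - |(legendreSym p lam : ℤ)|) * p * l ∧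
      (¬ (p : ℤ) ∣ lam → (rho k lam p : ℤ) = (p : ℤ) ^ (k - 1) - l) ∧
      (rho k 0 p : ℤ) = (p : ℤ) ^ (k - 1) + (p - 1) * l := by
  have hpodd : p % 2 = 1 := Nat.odd_iff.mp hp
  have hp2 : p ≠ 2 := by omega
  obtain ⟨t, ht⟩ := hk
  have htpos : 0 < t := by omega
  set m : ℕ := t - 1 with hm
  have hk2 : k = 2 * m + 2 := by omega
  -- the value of χ(-1)
  have hε : (quadraticChar (ZMod p)) (-1) = (-1 : ℤ) ^ ((p - 1) / 2) := by
    rw [quadraticChar_neg_one (ringChar_ne_two p hp2), ZMod.card,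
      ZMod.χ₄_eq_neg_one_pow hpodd]
    congr 1
    omega
  -- rewriting l
  have hl' : l = (quadraticChar (ZMod p) (-1)) ^ (m + 1) * (p : ℤ) ^ m := by
    rw [hl, hε, ← pow_mul]
    have he1 : k * (p - 1) / 4 = (p - 1) / 2 * (m + 1) := by
      have hv : p - 1 = 2 * ((p - 1) / 2) := by omega
      calc k * (p - 1) / 4 = (2 * m + 2) * (2 * ((p - 1) / 2)) / 4 := by rw [← hv, hk2]
        _ = 4 * ((p - 1) / 2 * (m + 1)) / 4 := by ring_nf
        _ = (p - 1) / 2 * (m + 1) := by omega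
    have he2 : (k - 2) / 2 = m := by omega
    rw [he1, he2]
  -- the main counting result
  have key : ∀ a : ZMod p, (cnt p k a : ℤ)
      = (p : ℤ) ^ (k - 1) + l * ((p : ℤ) * (if a = 0 then 1 else 0) - 1) := by
    intro a
    rw [hk2, cnt_even p hp2 m a, hl']
    have : (2 : ℕ) * m + 2 - 1 = 2 * m + 1 := by omega
    rw [this]
    try ring
  have hrho : (rho k lam p : ℤ) = (cnt p k ((lam : ZMod p)) : ℤ) := rfl
  have hrho0 : (rho k 0 p : ℤ) = (cnt p k ((0 : ZMod p)) : ℤ) := by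
    have : (rho k 0 p : ℤ) = (cnt p k (((0 : ℤ) : ZMod p)) : ℤ) := rfl
    rwa [Int.cast_zero] at this
  have habs : |(legendreSym p lam : ℤ)|
      = 1 - (if (lam : ZMod p) = 0 then (1 : ℤ) else 0) := by
    by_cases h0 : (lam : ZMod p) = 0
    · rw [if_pos h0, (legendreSym.eq_zero_iff p lam).mpr h0]
      simp
    · rw [if_neg h0]
      rcases legendreSym.eq_one_or_neg_one p h0 with h | h <;> rw [h] <;> simp
  refine ⟨?_, ?_, ?_⟩
  · rw [hrho, key, habs]
    ring
  · intro hndvd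
    have h0 : ¬ (lam : ZMod p) = 0 := fun h =>
      hndvd ((ZMod.intCast_zmod_eq_zero_iff_dvd lam p).mp h)
    rw [hrho, key, if_neg h0]
    ring
  · rw [hrho0, key, if_pos rfl]
    ring
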